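/- Let X_1,…,X_n be independent with X ~ ELS(λ1_n, θ1_n, α; F_b) and Y_1,…,Y_n independent with Y ~ ELS(λ1_n, θ1_n, β; F_b), i.e. both samples share the same scalar location λ and scalar scale θ > 0, with shape vectors α = (α_1,…,α_n) and β = (β_1,…,β_n). Assume α, β both lie in E_+ (or both in D_+). If α ⪰^w β (β is weakly supermajorized by α), then X_{n−1:n} ≤_st Y_{n−1:n}. -/

import Mathlib

open Finset

/-- Reversed hazard rate of the baseline distribution: `f_b / F_b`. -/
noncomputable def rtilde (Fb fb : ℝ → ℝ) : ℝ → ℝ := fun w => fb w / Fb w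

/-- Hazard rate of the baseline distribution: `f_b / (1 - F_b)`. -/
noncomputable def hrate (Fb fb : ℝ → ℝ) : ℝ → ℝ := fun w => fb w / (1 - Fb w)

/-- CDF of the exponentiated location-scale model `ELS(lam, th, al; F_b)`. -/
noncomputable def elsCDF (Fb : ℝ → ℝ) (lam th al : ℝ) : ℝ → ℝ :=
  fun x => Fb ((x - lam) / th) ^ al

/-- CDF of the second-largest order statistic of `n` independent random
variables with CDFs `F 0, …, F (n-1)`. -/
noncomputable def secondMaxCDF (n : ℕ) (F : Fin n → ℝ → ℝ) : ℝ → ℝ := fun x =>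
  (∑ l : Fin n, ∏ k ∈ Finset.univ.erase l, F k x) -
    ((n : ℝ) - 1) * ∏ k : Fin n, F k x

/-- CDF of the second-largest order statistic of `n` dependent random variables
with marginal CDFs `F i`, coupled by the Archimedean copula with generator `ψ`
(and inverse `φ`). -/
noncomputable def secondMaxCDFdep (n : ℕ) (ψ φ : ℝ → ℝ) (F : Fin n → ℝ → ℝ) : ℝ → ℝ := fun x =>
  (∑ l : Fin n, ψ (∑ k ∈ Finset.univ.erase l, φ (F k x))) -
    ((n : ℝ) - 1) * ψ (∑ k : Fin n, φ (F k x))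

/-- Reversed hazard rate of a CDF `F`: `F' / F`. -/
noncomputable def rhr (F : ℝ → ℝ) : ℝ → ℝ := fun x => deriv F x / F x

/-- Sum of the first `k` coordinates of a vector (partial sum from below). -/
def psum {n : ℕ} (x : Fin n → ℝ) (k : ℕ) : ℝ :=
  ∑ i ∈ Finset.univ.filter (fun i : Fin n => (i : ℕ) < k), x i

/-- Sum of the last `k` coordinates of a vector (partial sum from above). -/
def ssum {n : ℕ} (x : Fin n → ℝ) (k : ℕ) : ℝ :=
  ∑ i ∈ Finset.univ.filter (fun i : Fin n => n - k ≤ (i : ℕ)), x i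

/-- `E₊`: vectors with positive coordinates arranged in ascending order. -/
def EPlus {n : ℕ} (x : Fin n → ℝ) : Prop := (∀ i, 0 < x i) ∧ Monotone x

/-- `D₊`: vectors with positive coordinates arranged in descending order. -/
def DPlus {n : ℕ} (x : Fin n → ℝ) : Prop := (∀ i, 0 < x i) ∧ Antitone x

/-- `ψ` is an `n`-monotone Archimedean copula generator with right-continuous
inverse `φ`. -/
structure IsArchGen (n : ℕ) (ψ φ : ℝ → ℝ) : Prop where
  cont : Continuous ψ
  one : ψ 0 = 1
  anti : StrictAntiOn ψ (Set.Ici 0)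
  tend : Filter.Tendsto ψ Filter.atTop (nhds 0)
  range : ∀ x ≥ (0:ℝ), ψ x ∈ Set.Icc (0:ℝ) 1
  dm_sign : ∀ i ≤ n - 2, ∀ x ≥ (0:ℝ), 0 ≤ (-1:ℝ) ^ i * iteratedDeriv i ψ x
  dm_anti : AntitoneOn (fun x => (-1:ℝ) ^ (n - 2) * iteratedDeriv (n - 2) ψ x) (Set.Ici 0)
  dm_convex : ConvexOn ℝ (Set.Ici 0) (fun x => (-1:ℝ) ^ (n - 2) * iteratedDeriv (n - 2) ψ x)
  inv_left : ∀ x ≥ (0:ℝ), φ (ψ x) = x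
  inv_right : ∀ v ∈ Set.Ioc (0:ℝ) 1, ψ (φ v) = v


section Aux

lemma abel_range' : ∀ (n : ℕ) (w d : ℕ → ℝ),
    (∀ i j, i ≤ j → j < n → w j ≤ w i) →
    (∀ i, i < n → 0 ≤ w i) →
    (∀ k, k ≤ n → ∑ i ∈ Finset.range k, d i ≤ 0) →
    ∑ i ∈ Finset.range n, d i * w i ≤ 0 := by
  intro n
  induction n with
  | zero => intro w d _ _ _; simp
  | succ m ih =>
    intro w d hanti hnn hP
    have h1 : ∑ i ∈ Finset.range (m+1), d i * (w i - w m)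
        = (∑ i ∈ Finset.range (m+1), d i * w i) - (∑ i ∈ Finset.range (m+1), d i) * w m := by
      rw [Finset.sum_mul, ← Finset.sum_sub_distrib]
      exact Finset.sum_congr rfl (fun i _ => by ring)
    have h2 : ∑ i ∈ Finset.range (m+1), d i * (w i - w m)
        = ∑ i ∈ Finset.range m, d i * (w i - w m) := by
      rw [Finset.sum_range_succ]; simp
    have h3 : ∑ i ∈ Finset.range m, d i * (w i - w m) ≤ 0 := by
      apply ih (fun i => w i - w m) d
      · intro i j hij hj
        have := hanti i j hij (hj.trans (Nat.lt_succ_self m)); simpa using this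
      · intro i hi
        have := hanti i m (Nat.le_of_lt hi) (Nat.lt_succ_self m); simpa using this
      · intro k hk; exact hP k (hk.trans (Nat.le_succ m))
    have h4 : (∑ i ∈ Finset.range (m+1), d i) * w m ≤ 0 :=
      mul_nonpos_of_nonpos_of_nonneg (hP (m+1) le_rfl) (hnn m (Nat.lt_succ_self m))
    linarith [h1, h2.symm.trans h1]

lemma abel_fin' {n : ℕ} (w d : Fin n → ℝ)
    (hanti : ∀ i j : Fin n, i ≤ j → w j ≤ w i)
    (hnn : ∀ i, 0 ≤ w i)
    (hP : ∀ k, k ≤ n → ∑ i ∈ univ.filter (fun i : Fin n => (i : ℕ) < k), d i ≤ 0) :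
    ∑ i, d i * w i ≤ 0 := by
  classical
  set W : ℕ → ℝ := fun i => if h : i < n then w ⟨i, h⟩ else 0 with hW
  set D : ℕ → ℝ := fun i => if h : i < n then d ⟨i, h⟩ else 0 with hD
  have hsum : ∑ i, d i * w i = ∑ i ∈ Finset.range n, D i * W i := by
    rw [← Fin.sum_univ_eq_sum_range (fun i => D i * W i) n]
    refine Finset.sum_congr rfl (fun i _ => ?_)
    simp [hW, hD, i.isLt]
  rw [hsum]
  apply abel_range' n W D
  · intro i j hij hj
    have hi : i < n := lt_of_le_of_lt hij hj
    simp only [hW, dif_pos hi, dif_pos hj]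
    exact hanti ⟨i, hi⟩ ⟨j, hj⟩ hij
  · intro i hi; simp only [hW, dif_pos hi]; exact hnn _
  · intro k hk
    have step1 : ∑ i ∈ Finset.range k, D i = ∑ i ∈ Finset.range n, (if i < k then D i else 0) := by
      rw [← Finset.sum_filter]
      congr 1
      ext j; simp only [Finset.mem_filter, Finset.mem_range]; omega
    have step2 : ∑ i ∈ Finset.range n, (if i < k then D i else 0)
        = ∑ i : Fin n, (if (i : ℕ) < k then d i else 0) := by
      rw [← Fin.sum_univ_eq_sum_range (fun j => if j < k then D j else 0) n]
      refine Finset.sum_congr rfl (fun i _ => ?_)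
      by_cases h : (i : ℕ) < k <;> simp [h, hD, i.isLt]
    rw [step1, step2, ← Finset.sum_filter]
    exact hP k hk

lemma abel_fin_hi' {n : ℕ} (w d : Fin n → ℝ)
    (hmono : ∀ i j : Fin n, i ≤ j → w i ≤ w j)
    (hnn : ∀ i, 0 ≤ w i)
    (hP : ∀ k, k ≤ n → ∑ i ∈ univ.filter (fun i : Fin n => n - k ≤ (i : ℕ)), d i ≤ 0) :
    ∑ i, d i * w i ≤ 0 := by
  classical
  have hrev : ∑ i : Fin n, d (Fin.rev i) * w (Fin.rev i) = ∑ i, d i * w i :=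
    Fintype.sum_bijective Fin.rev Fin.rev_bijective
      (fun i => d (Fin.rev i) * w (Fin.rev i)) (fun i => d i * w i) (fun i => rfl)
  rw [← hrev]
  apply abel_fin' (fun i => w i.rev) (fun i => d i.rev)
  · intro i j hij
    exact hmono j.rev i.rev (Fin.rev_le_rev.mpr hij)
  · intro i; exact hnn _
  · intro k hk
    have himg : ∑ i ∈ univ.filter (fun i : Fin n => (i : ℕ) < k), d i.rev
        = ∑ i ∈ univ.filter (fun i : Fin n => n - k ≤ (i : ℕ)), d i := by
      apply Finset.sum_nbij' (fun i => Fin.rev i) (fun i => Fin.rev i)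
      · intro a ha
        simp only [Finset.mem_filter, Finset.mem_univ, true_and] at ha ⊢
        have h1 := a.isLt
        have h2 := Fin.val_rev a
        omega
      · intro a ha
        simp only [Finset.mem_filter, Finset.mem_univ, true_and] at ha ⊢
        have h1 := a.isLt
        have h2 := Fin.val_rev a
        omega
      · intro a _; exact Fin.rev_rev a
      · intro a _; exact Fin.rev_rev a
      · intro a _; rfl
    rw [himg]
    exact hP k hk

lemma w_nonneg' {n : ℕ} (hn : 2 ≤ n) (c : ℝ) (hc : c < 0) (γ : Fin n → ℝ)
    (hγ : ∀ i, 0 < γ i) (l : Fin n) :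
    0 ≤ (∑ k, Real.exp (c * ((∑ k', γ k') - γ k))) - Real.exp (c * ((∑ k', γ k') - γ l))
        - ((n:ℝ) - 1) * Real.exp (c * ∑ k', γ k') := by
  have hsub : (∑ k, Real.exp (c * ((∑ k', γ k') - γ k))) - Real.exp (c * ((∑ k', γ k') - γ l))
      = ∑ k ∈ univ.erase l, Real.exp (c * ((∑ k', γ k') - γ k)) :=
    (Finset.sum_erase_eq_sub (Finset.mem_univ l)).symm
  have hEle : ∀ k ∈ univ.erase l,
      Real.exp (c * ∑ k', γ k') ≤ Real.exp (c * ((∑ k', γ k') - γ k)) := by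
    intro k _
    apply Real.exp_le_exp.mpr
    nlinarith [mul_pos (neg_pos.mpr hc) (hγ k)]
  have hbound : ((n:ℝ)-1) * Real.exp (c * ∑ k', γ k')
      ≤ ∑ k ∈ univ.erase l, Real.exp (c * ((∑ k', γ k') - γ k)) := by
    calc ((n:ℝ)-1) * Real.exp (c * ∑ k', γ k')
        = ∑ _k ∈ univ.erase l, Real.exp (c * ∑ k', γ k') := by
          rw [Finset.sum_const, Finset.card_erase_of_mem (Finset.mem_univ l), card_univ,
            Fintype.card_fin, nsmul_eq_mul, Nat.cast_sub (by omega)]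
          norm_num
      _ ≤ _ := Finset.sum_le_sum hEle
  linarith [hsub, hbound]

lemma alg_sign' {n : ℕ} (d e : Fin n → ℝ) (c E nn : ℝ) (hc : c ≤ 0)
    (hdw : ∑ l, d l * ((∑ k, e k) - e l - nn * E) ≤ 0) :
    0 ≤ (∑ l, (c * ((∑ k, d k) - d l)) * e l) - nn * ((c * ∑ k, d k) * E) := by
  have h1 : ∑ l, (c * ((∑ k, d k) - d l)) * e l
      = c * (∑ k, d k) * (∑ k, e k) - c * ∑ l, d l * e l := by
    rw [Finset.sum_congr rfl (fun l _ =>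
      show (c * ((∑ k, d k) - d l)) * e l
        = c * (∑ k, d k) * e l - c * (d l * e l) from by ring)]
    rw [Finset.sum_sub_distrib, ← Finset.mul_sum, ← Finset.mul_sum]
  have h2 : ∑ l, d l * ((∑ k, e k) - e l - nn * E)
      = (∑ k, d k) * (∑ k, e k) - (∑ l, d l * e l) - nn * E * ∑ k, d k := by
    rw [Finset.sum_congr rfl (fun l _ =>
      show d l * ((∑ k, e k) - e l - nn * E)
        = d l * (∑ k, e k) - d l * e l - nn * E * d l from by ring)]
    rw [Finset.sum_sub_distrib, Finset.sum_sub_distrib, ← Finset.sum_mul, ← Finset.mul_sum]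
  rw [h1]
  rw [h2] at hdw
  nlinarith [mul_nonneg (neg_nonneg.mpr hc) (neg_nonneg.mpr hdw)]

lemma gen_mono' {n : ℕ} (A B : Fin n → ℝ) (Ac Bc nn : ℝ)
    (hkey : ∀ s ∈ Set.Icc (0:ℝ) 1,
       0 ≤ (∑ l, B l * Real.exp (A l + s * B l)) - nn * (Bc * Real.exp (Ac + s * Bc))) :
    (∑ l, Real.exp (A l)) - nn * Real.exp Ac
      ≤ (∑ l, Real.exp (A l + B l)) - nn * Real.exp (Ac + Bc) := by
  have hterm : ∀ (a b s : ℝ), HasDerivAt (fun s : ℝ => Real.exp (a + s * b))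
      (b * Real.exp (a + s * b)) s := by
    intro a b s
    have h1 : HasDerivAt (fun s : ℝ => a + s * b) b s := by
      simpa using ((hasDerivAt_id s).mul_const b).const_add a
    simpa [mul_comm] using h1.exp
  have hderiv : ∀ s : ℝ, HasDerivAt
      (fun s => (∑ l, Real.exp (A l + s * B l)) - nn * Real.exp (Ac + s * Bc))
      ((∑ l, B l * Real.exp (A l + s * B l)) - nn * (Bc * Real.exp (Ac + s * Bc))) s :=
    fun s => (HasDerivAt.fun_sum (fun l _ => hterm (A l) (B l) s)).sub
      ((hterm Ac Bc s).const_mul nn)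
  have hdiff : Differentiable ℝ
      (fun s => (∑ l, Real.exp (A l + s * B l)) - nn * Real.exp (Ac + s * Bc)) :=
    fun s => (hderiv s).differentiableAt
  have hmono : MonotoneOn
      (fun s => (∑ l, Real.exp (A l + s * B l)) - nn * Real.exp (Ac + s * Bc))
      (Set.Icc (0:ℝ) 1) := by
    apply monotoneOn_of_deriv_nonneg (convex_Icc 0 1) hdiff.continuous.continuousOn
      hdiff.differentiableOn
    intro s hs
    rw [(hderiv s).deriv]
    rw [interior_Icc] at hs
    exact hkey s (Set.mem_Icc_of_Ioo hs)
  have hm := hmono (Set.left_mem_Icc.mpr zero_le_one) (Set.right_mem_Icc.mpr zero_le_one)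
    zero_le_one
  simpa using hm

end Aux

theorem second_largest_st_shape_weak_supermajorization
    (n : ℕ) (hn : 2 ≤ n)
    (Fb fb : ℝ → ℝ)
    (hFb_mono : Monotone Fb)
    (hFb_range : ∀ x, Fb x ∈ Set.Icc (0:ℝ) 1)
    (hFb_deriv : ∀ x, HasDerivAt Fb (fb x) x)
    (hfb_nonneg : ∀ x, 0 ≤ fb x)
    (lam θ : ℝ) (hlam : 0 < lam) (hθ : 0 < θ)
    (α β : Fin n → ℝ)
    (horder : (EPlus α ∧ EPlus β ∧ (∀ k ≤ n, psum α k ≤ psum β k)) ∨ (DPlus α ∧ DPlus β ∧ (∀ k ≤ n, ssum α k ≤ ssum β k))) :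
    ∀ x, lam < x →
      secondMaxCDF n (fun i => elsCDF Fb lam θ (β i)) x ≤
        secondMaxCDF n (fun i => elsCDF Fb lam θ (α i)) x := by
  have hαpos : ∀ i, 0 < α i := by
    rcases horder with ⟨⟨h, _⟩, _, _⟩ | ⟨⟨h, _⟩, _, _⟩ <;> exact h
  have hβpos : ∀ i, 0 < β i := by
    rcases horder with ⟨_, ⟨h, _⟩, _⟩ | ⟨_, ⟨h, _⟩, _⟩ <;> exact h
  intro x hx
  obtain ⟨ht0, ht1⟩ := hFb_range ((x - lam) / θ)
  rcases eq_or_lt_of_le ht0 with h0 | h0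
  · -- Fb ((x - lam)/θ) = 0
    have hzero : ∀ (a : Fin n → ℝ), (∀ i, 0 < a i) →
        secondMaxCDF n (fun i => elsCDF Fb lam θ (a i)) x = 0 := by
      intro a ha
      have hval : ∀ i : Fin n, elsCDF Fb lam θ (a i) x = 0 := by
        intro i
        show Fb ((x - lam) / θ) ^ (a i) = 0
        rw [← h0]
        exact Real.zero_rpow (ne_of_gt (ha i))
      have hprod : ∀ l : Fin n, ∏ k ∈ univ.erase l, elsCDF Fb lam θ (a k) x = 0 := by
        intro l
        obtain ⟨j, hj⟩ := Fintype.exists_ne_of_one_lt_card (by simp; omega) l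
        exact Finset.prod_eq_zero (Finset.mem_erase.mpr ⟨hj, Finset.mem_univ j⟩) (hval j)
      have hprod2 : ∏ k : Fin n, elsCDF Fb lam θ (a k) x = 0 :=
        Finset.prod_eq_zero (Finset.mem_univ (⟨0, by omega⟩ : Fin n)) (hval _)
      show (∑ l : Fin n, ∏ k ∈ univ.erase l, elsCDF Fb lam θ (a k) x)
          - ((n:ℝ) - 1) * ∏ k : Fin n, elsCDF Fb lam θ (a k) x = 0
      rw [hprod2, Finset.sum_eq_zero (fun l _ => hprod l)]
      ring
    rw [hzero α hαpos, hzero β hβpos]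
  rcases eq_or_lt_of_le ht1 with h1 | h1
  · -- Fb ((x - lam)/θ) = 1
    have hone : ∀ (a : Fin n → ℝ),
        secondMaxCDF n (fun i => elsCDF Fb lam θ (a i)) x = 1 := by
      intro a
      have hval : ∀ i : Fin n, elsCDF Fb lam θ (a i) x = 1 := by
        intro i
        show Fb ((x - lam) / θ) ^ (a i) = 1
        rw [h1]
        exact Real.one_rpow _
      show (∑ l : Fin n, ∏ k ∈ univ.erase l, elsCDF Fb lam θ (a k) x)
          - ((n:ℝ) - 1) * ∏ k : Fin n, elsCDF Fb lam θ (a k) x = 1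
      rw [Finset.prod_congr rfl (fun k _ => hval k), Finset.prod_const_one,
        Finset.sum_congr rfl (fun l _ => Finset.prod_congr rfl (fun k _ => hval k)),
        Finset.sum_congr rfl (fun l _ => Finset.prod_const_one), Finset.sum_const,
        card_univ, Fintype.card_fin, nsmul_eq_mul, mul_one]
      ring
    rw [hone α, hone β]
  · -- main case : 0 < Fb (...) < 1
    set c : ℝ := Real.log (Fb ((x - lam) / θ)) with hcdef
    have hc : c < 0 := Real.log_neg h0 h1
    have key : ∀ a : Fin n → ℝ,
        secondMaxCDF n (fun i => elsCDF Fb lam θ (a i)) x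
          = (∑ l, Real.exp (c * ((∑ k, a k) - a l)))
            - ((n:ℝ)-1) * Real.exp (c * ∑ k, a k) := by
      intro a
      show (∑ l : Fin n, ∏ k ∈ univ.erase l, Fb ((x - lam) / θ) ^ (a k))
          - ((n:ℝ) - 1) * ∏ k : Fin n, Fb ((x - lam) / θ) ^ (a k) = _
      congr 1
      · refine Finset.sum_congr rfl (fun l _ => ?_)
        rw [Finset.prod_congr rfl (fun k _ => Real.rpow_def_of_pos h0 (a k))]
        rw [← Real.exp_sum, ← Finset.mul_sum, Finset.sum_erase_eq_sub (Finset.mem_univ l)]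
      · congr 1
        rw [Finset.prod_congr rfl (fun k _ => Real.rpow_def_of_pos h0 (a k))]
        rw [← Real.exp_sum, ← Finset.mul_sum]
    rw [key α, key β]
    have hS : ∑ k, (α k - β k) = (∑ k, α k) - ∑ k, β k := Finset.sum_sub_distrib _ _
    -- the key derivative-sign estimate
    have hkey : ∀ s ∈ Set.Icc (0:ℝ) 1,
        0 ≤ (∑ l, (c * ((∑ k, (α k - β k)) - (α l - β l))) *
                Real.exp ((c * ((∑ k, β k) - β l)) + s * (c * ((∑ k, (α k - β k)) - (α l - β l)))))
            - ((n:ℝ)-1) * ((c * ∑ k, (α k - β k)) *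
                Real.exp ((c * ∑ k, β k) + s * (c * ∑ k, (α k - β k)))) := by
      intro s hs
      obtain ⟨hs0, hs1⟩ := hs
      have hsum : ∑ k', (β k' + s * (α k' - β k'))
          = (∑ k, β k) + s * ∑ k, (α k - β k) := by
        rw [Finset.sum_add_distrib, Finset.mul_sum]
      have hE1 : ∀ l : Fin n,
          (c * ((∑ k, β k) - β l)) + s * (c * ((∑ k, (α k - β k)) - (α l - β l)))
            = c * ((∑ k', (β k' + s * (α k' - β k'))) - (β l + s * (α l - β l))) := by
        intro l; rw [hsum]; ring
      have hE2 : (c * ∑ k, β k) + s * (c * ∑ k, (α k - β k))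
          = c * ∑ k', (β k' + s * (α k' - β k')) := by
        rw [hsum]; ring
      have hγpos : ∀ i, 0 < β i + s * (α i - β i) := by
        intro i
        have hm := lt_min (hαpos i) (hβpos i)
        have hp1 : 0 ≤ s * (α i - min (α i) (β i)) :=
          mul_nonneg hs0 (sub_nonneg.mpr (min_le_left _ _))
        have hp2 : 0 ≤ (1 - s) * (β i - min (α i) (β i)) :=
          mul_nonneg (by linarith) (sub_nonneg.mpr (min_le_right _ _))
        nlinarith [hm, hp1, hp2]
      -- Abel-type inequality : ∑ d l * w l ≤ 0
      have hdw : ∑ l, (α l - β l) *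
          ((∑ k, Real.exp (c * ((∑ k', (β k' + s * (α k' - β k'))) - (β k + s * (α k - β k)))))
            - Real.exp (c * ((∑ k', (β k' + s * (α k' - β k'))) - (β l + s * (α l - β l))))
            - ((n:ℝ)-1) * Real.exp (c * ∑ k', (β k' + s * (α k' - β k')))) ≤ 0 := by
        set w : Fin n → ℝ := fun l =>
          (∑ k, Real.exp (c * ((∑ k', (β k' + s * (α k' - β k'))) - (β k + s * (α k - β k)))))
            - Real.exp (c * ((∑ k', (β k' + s * (α k' - β k'))) - (β l + s * (α l - β l))))
            - ((n:ℝ)-1) * Real.exp (c * ∑ k', (β k' + s * (α k' - β k'))) with hwdef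
        have hnn : ∀ l, 0 ≤ w l := fun l =>
          w_nonneg' hn c hc (fun i => β i + s * (α i - β i)) hγpos l
        rcases horder with ⟨⟨_, hαm⟩, ⟨_, hβm⟩, hps⟩ | ⟨⟨_, hαm⟩, ⟨_, hβm⟩, hps⟩
        · -- E₊ : γ monotone, w antitone
          apply abel_fin' w (fun l => α l - β l)
          · intro i j hij
            have hγij : β i + s * (α i - β i) ≤ β j + s * (α j - β j) := by
              have h1 : α i ≤ α j := hαm hij
              have h2 : β i ≤ β j := hβm hij
              nlinarith [mul_nonneg hs0 (sub_nonneg.mpr h1),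
                mul_nonneg (by linarith : (0:ℝ) ≤ 1 - s) (sub_nonneg.mpr h2)]
            have hexp : Real.exp (c * ((∑ k', (β k' + s * (α k' - β k'))) - (β i + s * (α i - β i))))
                ≤ Real.exp (c * ((∑ k', (β k' + s * (α k' - β k'))) - (β j + s * (α j - β j)))) := by
              apply Real.exp_le_exp.mpr
              nlinarith [mul_nonneg (neg_nonneg.mpr hc.le) (sub_nonneg.mpr hγij)]
            simp only [hwdef]
            linarith [hexp]
          · exact hnn
          · intro k hk
            have := hps k hk
            rw [psum, psum] at this
            have hd : ∑ i ∈ univ.filter (fun i : Fin n => (i : ℕ) < k), (α i - β i)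
                = (∑ i ∈ univ.filter (fun i : Fin n => (i : ℕ) < k), α i)
                  - ∑ i ∈ univ.filter (fun i : Fin n => (i : ℕ) < k), β i :=
              Finset.sum_sub_distrib _ _
            linarith [hd]
        · -- D₊ : γ antitone, w monotone
          apply abel_fin_hi' w (fun l => α l - β l)
          · intro i j hij
            have hγij : β j + s * (α j - β j) ≤ β i + s * (α i - β i) := by
              have h1 : α j ≤ α i := hαm hij
              have h2 : β j ≤ β i := hβm hij
              nlinarith [mul_nonneg hs0 (sub_nonneg.mpr h1),
                mul_nonneg (by linarith : (0:ℝ) ≤ 1 - s) (sub_nonneg.mpr h2)]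
            have hexp : Real.exp (c * ((∑ k', (β k' + s * (α k' - β k'))) - (β j + s * (α j - β j))))
                ≤ Real.exp (c * ((∑ k', (β k' + s * (α k' - β k'))) - (β i + s * (α i - β i)))) := by
              apply Real.exp_le_exp.mpr
              nlinarith [mul_nonneg (neg_nonneg.mpr hc.le) (sub_nonneg.mpr hγij)]
            simp only [hwdef]
            linarith [hexp]
          · exact hnn
          · intro k hk
            have := hps k hk
            rw [ssum, ssum] at this
            have hd : ∑ i ∈ univ.filter (fun i : Fin n => n - k ≤ (i : ℕ)), (α i - β i)
                = (∑ i ∈ univ.filter (fun i : Fin n => n - k ≤ (i : ℕ)), α i)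
                  - ∑ i ∈ univ.filter (fun i : Fin n => n - k ≤ (i : ℕ)), β i :=
              Finset.sum_sub_distrib _ _
            linarith [hd]
      have hgoal := alg_sign' (fun k => α k - β k)
        (fun l => Real.exp (c * ((∑ k', (β k' + s * (α k' - β k'))) - (β l + s * (α l - β l)))))
        c (Real.exp (c * ∑ k', (β k' + s * (α k' - β k')))) ((n:ℝ)-1) hc.le hdw
      simp only [hE1, hE2]
      exact hgoal
    have main := gen_mono' (fun l => c * ((∑ k, β k) - β l))
      (fun l => c * ((∑ k, (α k - β k)) - (α l - β l)))
      (c * ∑ k, β k) (c * ∑ k, (α k - β k)) ((n:ℝ)-1) hkey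
    have hR1 : (∑ l, Real.exp ((c * ((∑ k, β k) - β l))
        + (c * ((∑ k, (α k - β k)) - (α l - β l)))))
        = ∑ l, Real.exp (c * ((∑ k, α k) - α l)) :=
      Finset.sum_congr rfl (fun l _ => by rw [hS]; ring_nf)
    have hR2 : (c * ∑ k, β k) + (c * ∑ k, (α k - β k)) = c * ∑ k, α k := by
      rw [hS]; ring
    rw [hR1, hR2] at main
    exact main
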